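/- Consider the two-node cyclic model: for fixed β₁₂ ∈ ℝ and data vectors Y₁, Y₂ ∈ ℝ^N that are linearly independent, the function β₂₁ ↦ ‖Y₂ − β₂₁Y₁‖²/(1 − β₁₂β₂₁)² on {β₂₁ : β₁₂β₂₁ ≠ 1} attains a unique minimum if and only if 1 − β₁₂·⟨Y₂, Y₁⟩/‖Y₁‖² ≠ 0. -/

import Mathlib

theorem stmt_15 (N : ℕ) (hN : 2 ≤ N) (Y1 Y2 : Fin N → ℝ)
    (hInd : LinearIndependent ℝ ![Y1, Y2]) (b12 : ℝ) :
    let f : ℝ → ℝ := fun b21 => (∑ i, (Y2 i - b21 * Y1 i) ^ 2) / (1 - b12 * b21) ^ 2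
    (∃! b21 : ℝ, b12 * b21 ≠ 1 ∧
        ∀ b' : ℝ, b12 * b' ≠ 1 → f b21 ≤ f b') ↔
      1 - b12 * ((∑ i, Y2 i * Y1 i) / (∑ i, (Y1 i) ^ 2)) ≠ 0 := by
  intro f
  set a : ℝ := ∑ i, (Y1 i) ^ 2 with ha_def
  set c : ℝ := ∑ i, Y2 i * Y1 i with hc_def
  set d : ℝ := ∑ i, (Y2 i) ^ 2 with hd_def
  set A : ℝ := d * b12 ^ 2 - 2 * c * b12 + a with hA_def
  set e : ℝ := a - c * b12 with he_def
  set m : ℝ := c - d * b12 with hm_def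
  -- a > 0
  have hY1 : Y1 ≠ 0 := by
    have := hInd.ne_zero 0
    simpa using this
  have hi1 : ∃ i, Y1 i ≠ 0 := by
    by_contra h
    push_neg at h
    exact hY1 (funext fun i => h i)
  have ha : 0 < a := by
    obtain ⟨i, hi⟩ := hi1
    exact Finset.sum_pos' (fun j _ => sq_nonneg _) ⟨i, Finset.mem_univ i, by positivity⟩
  -- A > 0
  have hv : ∃ i, b12 * Y2 i - Y1 i ≠ 0 := by
    by_contra h
    push_neg at h
    have hsum : (∑ i : Fin 2, (![1, -b12] : Fin 2 → ℝ) i • (![Y1, Y2] : Fin 2 → (Fin N → ℝ)) i) = 0 := by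
      rw [Fin.sum_univ_two]
      funext j
      have := h j
      simp only [Matrix.cons_val_zero, Matrix.cons_val_one, Matrix.head_cons, Pi.add_apply,
        Pi.smul_apply, smul_eq_mul, Pi.zero_apply]
      linarith
    have := Fintype.linearIndependent_iff.mp hInd ![1, -b12] hsum 0
    simp at this
  have hAsum : (∑ i, (b12 * Y2 i - Y1 i) ^ 2) = A := by
    have h1 : ∀ i, (b12 * Y2 i - Y1 i) ^ 2
        = b12 ^ 2 * (Y2 i) ^ 2 - (2 * b12) * (Y2 i * Y1 i) + (Y1 i) ^ 2 := fun i => by ring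
    rw [Finset.sum_congr rfl (fun i _ => h1 i), Finset.sum_add_distrib, Finset.sum_sub_distrib,
      ← Finset.mul_sum, ← Finset.mul_sum, ← ha_def, ← hc_def, ← hd_def, hA_def]
    ring
  have hA : 0 < A := by
    obtain ⟨i, hi⟩ := hv
    rw [← hAsum]
    exact Finset.sum_pos' (fun j _ => sq_nonneg _) ⟨i, Finset.mem_univ i, by positivity⟩
  -- numerator expansion
  have hnum : ∀ b : ℝ, (∑ i, (Y2 i - b * Y1 i) ^ 2) = d - 2 * b * c + b ^ 2 * a := by
    intro b
    have h1 : ∀ i, (Y2 i - b * Y1 i) ^ 2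
        = b ^ 2 * (Y1 i) ^ 2 - (2 * b) * (Y2 i * Y1 i) + (Y2 i) ^ 2 := fun i => by ring
    rw [Finset.sum_congr rfl (fun i _ => h1 i), Finset.sum_add_distrib, Finset.sum_sub_distrib,
      ← Finset.mul_sum, ← Finset.mul_sum, ← ha_def, ← hc_def, ← hd_def]
    ring
  -- value of f
  have hfval : ∀ b : ℝ, b12 * b ≠ 1 →
      f b = ((a * d - c ^ 2) * (1 - b12 * b) ^ 2 + (e * b - m) ^ 2) / (A * (1 - b12 * b) ^ 2) := by
    intro b hb
    have ht : (1 - b12 * b) ≠ 0 := fun h => hb (by linarith [sub_eq_zero.mp h])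
    show (∑ i, (Y2 i - b * Y1 i) ^ 2) / (1 - b12 * b) ^ 2 = _
    rw [hnum b, div_eq_div_iff (pow_ne_zero 2 ht) (mul_ne_zero hA.ne' (pow_ne_zero 2 ht))]
    rw [hA_def, he_def, hm_def]
    ring
  -- RHS rephrasing
  have hrhs : (1 - b12 * (c / a) ≠ 0) ↔ e ≠ 0 := by
    rw [not_iff_not]
    constructor
    · intro h
      have h2 : a * (1 - b12 * (c / a)) = e := by
        rw [he_def]
        field_simp
      rw [← h2, h, mul_zero]
    · intro h
      have h2 : 1 - b12 * (c / a) = e / a := by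
        rw [he_def]
        field_simp
      rw [h2, h, zero_div]
  rw [hrhs]
  clear_value a c d A e m
  constructor
  · -- forward: contrapositive
    intro hex he0
    obtain ⟨b, ⟨hb, hmin⟩, _⟩ := hex
    have he0' : a - c * b12 = 0 := by rw [← he_def]; exact he0
    have hb12 : b12 ≠ 0 := by
      intro h
      rw [h, mul_zero, sub_zero] at he0'
      exact ha.ne' he0'
    have hm0 : m ≠ 0 := by
      intro h
      have hAe : A = e - b12 * m := by rw [hA_def, he_def, hm_def]; ring
      have : A = 0 := by rw [hAe, he0, h]; ring
      exact hA.ne' this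
    have ht : (1 - b12 * b) ≠ 0 := fun h => hb (by linarith [sub_eq_zero.mp h])
    set t : ℝ := 1 - b12 * b with ht_def
    have ht2 : 0 < t ^ 2 := (sq_nonneg t).lt_of_ne' (pow_ne_zero 2 ht)
    set b' : ℝ := (1 - 2 * t) / b12 with hb'_def
    have hbb' : b12 * b' = 1 - 2 * t := by rw [hb'_def]; field_simp
    have hb' : b12 * b' ≠ 1 := by
      rw [hbb']
      intro h
      exact ht (by linarith)
    have ht' : 1 - b12 * b' = 2 * t := by rw [hbb']; ring
    have hm2 : 0 < m ^ 2 := (sq_nonneg m).lt_of_ne' (pow_ne_zero 2 hm0)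
    have hlt : f b' < f b := by
      rw [hfval b hb, hfval b' hb', ht', ← ht_def]
      have h1 : e * b - m = -m := by rw [he0]; ring
      have h2 : e * b' - m = -m := by rw [he0]; ring
      rw [h1, h2]
      rw [div_lt_div_iff₀ (mul_pos hA (by nlinarith)) (mul_pos hA ht2)]
      nlinarith [mul_pos (mul_pos hA hm2) ht2]
    exact absurd (hmin b' hb') (not_le.mpr hlt)
  · -- backward
    intro he
    have hAem : A = e - b12 * m := by rw [hA_def, he_def, hm_def]; ring
    have hbs : b12 * (m / e) ≠ 1 := by
      intro h
      have h2 : b12 * m = e := by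
        field_simp at h
        linarith
      have : A = 0 := by rw [hAem, ← h2]; ring
      exact hA.ne' this
    have hts : (1 - b12 * (m / e)) ≠ 0 := fun h => hbs (by linarith [sub_eq_zero.mp h])
    have hts2 : 0 < (1 - b12 * (m / e)) ^ 2 := (sq_nonneg _).lt_of_ne' (pow_ne_zero 2 hts)
    have hz : e * (m / e) - m = 0 := by field_simp; ring
    refine ⟨m / e, ⟨hbs, ?_⟩, ?_⟩
    · -- minimality
      intro b hb
      have ht : (1 - b12 * b) ≠ 0 := fun h => hb (by linarith [sub_eq_zero.mp h])
      have ht2 : 0 < (1 - b12 * b) ^ 2 := (sq_nonneg _).lt_of_ne' (pow_ne_zero 2 ht)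
      rw [hfval b hb, hfval _ hbs, hz]
      rw [div_le_div_iff₀ (mul_pos hA hts2) (mul_pos hA ht2)]
      nlinarith [mul_nonneg (mul_nonneg (sq_nonneg (e * b - m)) hA.le) hts2.le]
    · -- uniqueness
      rintro b ⟨hb, hmin⟩
      have hle := hmin (m / e) hbs
      have ht : (1 - b12 * b) ≠ 0 := fun h => hb (by linarith [sub_eq_zero.mp h])
      have ht2 : 0 < (1 - b12 * b) ^ 2 := (sq_nonneg _).lt_of_ne' (pow_ne_zero 2 ht)
      rw [hfval b hb, hfval _ hbs, hz] at hle
      rw [div_le_div_iff₀ (mul_pos hA ht2) (mul_pos hA hts2)] at hle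
      have hs1 : (e * b - m) ^ 2 ≤ 0 := by
        nlinarith [mul_pos hA hts2, mul_pos hA ht2]
      have hs0 : e * b - m = 0 := by
        have h2 : (e * b - m) ^ 2 = 0 := le_antisymm hs1 (sq_nonneg _)
        exact pow_eq_zero_iff (two_ne_zero) |>.mp h2
      field_simp
      linarith
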